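/- For every x = (x₁,…,xₙ) on the unit sphere of ℝⁿ (i.e. Σ xᵢ² = 1) and n ≥ 2, the normalized exponential average satisfies (1/n)·Σᵢ exp((xᵢ²/2)·log n) ≤ 2. Consequently the ψ₂-norm of x with respect to the uniform probability measure on {1,…,n} is at most √(2/log n). -/
import Mathlib


/-- The ψ₂-norm of a function on `{1,…,n}` with the uniform probability measure. -/
noncomputable def psi2Norm (n : ℕ) (f : Fin n → ℝ) : ℝ :=
  sInf {l : ℝ | 0 < l ∧ (1 / n) * ∑ i, Real.exp (f i ^ 2 / l ^ 2) ≤ Real.exp 1}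

theorem sphere_psi2_bound (n : ℕ) (hn : 2 ≤ n) (x : Fin n → ℝ)
    (hx : ∑ i, x i ^ 2 = 1) :
    (1 / n) * ∑ i, Real.exp ((x i ^ 2 / 2) * Real.log n) ≤ 2 ∧
      psi2Norm n x ≤ Real.sqrt (2 / Real.log n) := by
  have hn1 : (1:ℝ) ≤ n := by exact_mod_cast Nat.one_le_of_lt hn
  have hn0 : (0:ℝ) < n := lt_of_lt_of_le one_pos hn1
  have hlog : 0 < Real.log n := Real.log_pos (by exact_mod_cast hn)
  have key : ∀ i, Real.exp ((x i ^ 2 / 2) * Real.log n)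
      ≤ 1 + x i ^ 2 * (Real.sqrt n - 1) := by
    intro i
    have hx0 : 0 ≤ x i ^ 2 := sq_nonneg _
    have hx1 : x i ^ 2 ≤ 1 := by
      rw [← hx]
      exact Finset.single_le_sum (fun j _ => sq_nonneg (x j)) (Finset.mem_univ i)
    have h1 : Real.exp ((x i ^ 2 / 2) * Real.log n)
        = Real.sqrt n ^ (x i ^ 2 : ℝ) := by
      rw [Real.rpow_def_of_pos (Real.sqrt_pos.mpr hn0)]
      congr 1
      rw [Real.log_sqrt hn0.le]
      ring
    rw [h1]
    have h2 := Real.geom_mean_le_arith_mean2_weighted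
      (w₁ := 1 - x i ^ 2) (w₂ := x i ^ 2) (p₁ := 1) (p₂ := Real.sqrt n)
      (by linarith) hx0 zero_le_one (Real.sqrt_nonneg _) (by ring)
    calc Real.sqrt n ^ (x i ^ 2 : ℝ)
        = (1:ℝ) ^ (1 - x i ^ 2 : ℝ) * Real.sqrt n ^ (x i ^ 2 : ℝ) := by
          rw [Real.one_rpow, one_mul]
      _ ≤ (1 - x i ^ 2) * 1 + x i ^ 2 * Real.sqrt n := h2
      _ = 1 + x i ^ 2 * (Real.sqrt n - 1) := by ring
  have hsum : ∑ i, Real.exp ((x i ^ 2 / 2) * Real.log n) ≤ n + (Real.sqrt n - 1) := by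
    calc ∑ i, Real.exp ((x i ^ 2 / 2) * Real.log n)
        ≤ ∑ i, (1 + x i ^ 2 * (Real.sqrt n - 1)) :=
          Finset.sum_le_sum fun i _ => key i
      _ = n + (Real.sqrt n - 1) := by
          rw [Finset.sum_add_distrib, Finset.sum_const, ← Finset.sum_mul, hx]
          simp
  have hmain : (1 / n : ℝ) * ∑ i, Real.exp ((x i ^ 2 / 2) * Real.log n) ≤ 2 := by
    have hsqn : Real.sqrt n ≤ n := by
      nlinarith [Real.sq_sqrt hn0.le, Real.sqrt_nonneg (n:ℝ)]
    rw [div_mul_eq_mul_div, one_mul, div_le_iff₀ hn0]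
    linarith
  refine ⟨hmain, ?_⟩
  have hl0 : 0 < Real.sqrt (2 / Real.log n) := Real.sqrt_pos.mpr (by positivity)
  have hl2 : Real.sqrt (2 / Real.log n) ^ 2 = 2 / Real.log n :=
    Real.sq_sqrt (by positivity)
  apply csInf_le
  · exact ⟨0, fun y hy => hy.1.le⟩
  · refine ⟨hl0, ?_⟩
    have heq : ∀ i, x i ^ 2 / Real.sqrt (2 / Real.log n) ^ 2
        = (x i ^ 2 / 2) * Real.log n := by
      intro i
      rw [hl2]
      field_simp
    simp_rw [heq]
    refine hmain.trans ?_
    linarith [Real.add_one_le_exp 1]
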